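/- Let μ be a partition and let t ∈ ℂ with 0 < |t| < 1. Then the double series Σ over pairs 1 ≤ i < j < ∞ of ( t^{μ_i − μ_j + j − i} − t^{j − i} ) converges absolutely and equals − Σ_{x∈μ} t^{h(x)}, where h(x) = μ_i + (μ^t)_j − i − j + 1 is the hook length of the cell x = (i,j) of μ. -/

import Mathlib

/-- A partition `μ = (μ_1 ≥ μ_2 ≥ …)`: a weakly decreasing, eventually zero sequence of
naturals.  We index parts from `0`, so `part i` is the part `μ_{i+1}` of the paper. -/
structure Partition' where
  part : ℕ → ℕ
  antitone' : ∀ ⦃i j : ℕ⦄, i ≤ j → part j ≤ part i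
  eventually_zero : ∃ N, ∀ n, N ≤ n → part n = 0

namespace Partition'

/-- The Young diagram of `μ`, as a set of (0-indexed) cells `(i, j)`, `j < μ_{i+1}`. -/
def cellsSet (μ : Partition') : Set (ℕ × ℕ) := {x | x.2 < μ.part x.1}

lemma cellsSet_finite (μ : Partition') : μ.cellsSet.Finite := by
  obtain ⟨N, hN⟩ := μ.eventually_zero
  have hsub : μ.cellsSet ⊆ Set.Iio N ×ˢ Set.Iio (μ.part 0) := by
    rintro ⟨i, j⟩ hx
    have hj : j < μ.part i := hx
    refine Set.mem_prod.mpr ⟨?_, ?_⟩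
    · by_contra h
      simp only [Set.mem_Iio, not_lt] at h
      rw [hN i h] at hj
      omega
    · exact Set.mem_Iio.mpr (lt_of_lt_of_le hj (μ.antitone' (Nat.zero_le i)))
  exact ((Set.finite_Iio N).prod (Set.finite_Iio (μ.part 0))).subset hsub

/-- The cells of the Young diagram of `μ`, as a finite set. -/
noncomputable def cells (μ : Partition') : Finset (ℕ × ℕ) := μ.cellsSet_finite.toFinset

/-- `|μ|`, the size (number of cells, i.e. sum of the parts) of `μ`. -/
noncomputable def size (μ : Partition') : ℕ := μ.cells.card

lemma row_finite (μ : Partition') (j : ℕ) : {i : ℕ | j < μ.part i}.Finite := by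
  obtain ⟨N, hN⟩ := μ.eventually_zero
  apply (Set.finite_Iio N).subset
  intro i hi
  simp only [Set.mem_setOf_eq] at hi
  simp only [Set.mem_Iio]
  by_contra h
  push_neg at h
  rw [hN i h] at hi
  omega

/-- The conjugate (transposed) partition `μ^t`: `(μ^t)_{j+1} = #{i : μ_{i+1} > j}`. -/
noncomputable def conj (μ : Partition') : Partition' where
  part j := Nat.card {i : ℕ | j < μ.part i}
  antitone' := by
    intro j k hjk
    exact Nat.card_mono (μ.row_finite j) (fun i hi => lt_of_le_of_lt hjk hi)
  eventually_zero := by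
    refine ⟨μ.part 0, fun j hj => ?_⟩
    have h : {i : ℕ | j < μ.part i} = (∅ : Set ℕ) := by
      ext i
      simp only [Set.mem_setOf_eq, Set.mem_empty_iff_false, iff_false, not_lt]
      exact le_trans (μ.antitone' (Nat.zero_le i)) hj
    try simp only []
    rw [h]
    simp

/-- The content `c(x) = j - i` of a (0-indexed) cell `x = (i,j)`. -/
def content (x : ℕ × ℕ) : ℤ := (x.2 : ℤ) - (x.1 : ℤ)

/-- The hook length `h(x) = μ_i + (μ^t)_j - i - j + 1` (1-indexed) of a cell of `μ`,
as an integer. -/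
noncomputable def hook (μ : Partition') (x : ℕ × ℕ) : ℤ :=
  (μ.part x.1 : ℤ) + (μ.conj.part x.2 : ℤ) - (x.1 : ℤ) - (x.2 : ℤ) - 1

/-- `n(μ) = Σ_i (i-1) μ_i` (1-indexed), i.e. `Σ_i i * μ_{i+1}` (0-indexed). -/
noncomputable def nstat (μ : Partition') : ℕ := ∑ᶠ i : ℕ, i * μ.part i

/-- The empty partition. -/
def empty : Partition' := ⟨fun _ => 0, fun _ _ _ => le_rfl, ⟨0, fun _ _ => rfl⟩⟩

/-- The number of (nonzero) parts of `μ`. -/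
noncomputable def length (μ : Partition') : ℕ := μ.conj.part 0

end Partition'

namespace Partition'

lemma lt_conj_iff (μ : Partition') {j k : ℕ} : j < μ.conj.part k ↔ k < μ.part j := by
  have hfin := μ.row_finite k
  have hcard : μ.conj.part k = hfin.toFinset.card := by
    show Nat.card {i : ℕ | k < μ.part i} = _
    exact Nat.card_eq_card_finite_toFinset hfin
  constructor
  · intro hj
    by_contra hk
    push_neg at hk
    have hsub : hfin.toFinset ⊆ Finset.range j := by
      intro x hx
      rw [Set.Finite.mem_toFinset] at hx
      rw [Finset.mem_range]
      by_contra hxj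
      push_neg at hxj
      have := μ.antitone' hxj
      simp only [Set.mem_setOf_eq] at hx
      omega
    have := Finset.card_le_card hsub
    rw [Finset.card_range] at this
    omega
  · intro hk
    have hsub : Finset.range (j+1) ⊆ hfin.toFinset := by
      intro x hx
      rw [Finset.mem_range] at hx
      rw [Set.Finite.mem_toFinset]
      exact lt_of_lt_of_le hk (μ.antitone' (by omega))
    have := Finset.card_le_card hsub
    rw [Finset.card_range] at this
    omega

end Partition'

private lemma hkv_pos (μ : Partition') {i k : ℕ} (h : k < μ.part i) :
    i + k + 1 < μ.part i + μ.conj.part k := by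
  have := μ.lt_conj_iff.mpr h
  omega

private lemma armv_strictMono (μ : Partition') (i : ℕ) :
    StrictMono (fun d => μ.part i - μ.part (i + d + 1) + (d + 1)) := by
  apply strictMono_nat_of_lt_succ
  intro d
  have h1 : μ.part (i + d + 1 + 1) ≤ μ.part (i + d + 1) := μ.antitone' (by omega)
  have h2 : μ.part (i + d + 1) ≤ μ.part i := μ.antitone' (by omega)
  show μ.part i - μ.part (i + d + 1) + (d + 1) < μ.part i - μ.part (i + d + 1 + 1) + (d + 1 + 1)
  omega

private lemma hkv_lt (μ : Partition') {i k k' : ℕ} (hlt : k < k') (hm : k' < μ.part i) :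
    μ.part i + μ.conj.part k' - (i + k' + 1) < μ.part i + μ.conj.part k - (i + k + 1) := by
  have h1 : μ.conj.part k' ≤ μ.conj.part k := μ.conj.antitone' hlt.le
  have h2 := hkv_pos μ hm
  have h3 := hkv_pos μ (hlt.trans hm)
  omega

private lemma armv_ne_hkv (μ : Partition') {i k : ℕ} (d : ℕ) (hk : k < μ.part i) :
    μ.part i - μ.part (i + d + 1) + (d + 1) ≠ μ.part i + μ.conj.part k - (i + k + 1) := by
  intro heq
  have hpos := hkv_pos μ hk
  have hle : μ.part (i + d + 1) ≤ μ.part i := μ.antitone' (by omega)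
  by_cases hc : k < μ.part (i + d + 1)
  · have := μ.lt_conj_iff.mpr hc
    omega
  · push_neg at hc
    have : ¬ (i + d + 1 < μ.conj.part k) := fun h => by
      have := μ.lt_conj_iff.mp h; omega
    omega

private lemma mem_arm_or_hk (μ : Partition') (i m : ℕ) (hm : 1 ≤ m) :
    (∃ d, μ.part i - μ.part (i + d + 1) + (d + 1) = m) ∨
      ∃ k, k < μ.part i ∧ μ.part i + μ.conj.part k - (i + k + 1) = m := by
  classical
  have hP : ∃ j, μ.part j + i + m < μ.part i + j := by
    refine ⟨μ.part i + i + m + 1, ?_⟩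
    have : μ.part (μ.part i + i + m + 1) ≤ μ.part i := μ.antitone' (by omega)
    omega
  have h1 : μ.part (Nat.find hP) + i + m < μ.part i + (Nat.find hP) := Nat.find_spec hP
  set j1 := Nat.find hP with hj1def
  have hj1i : i < j1 := by
    by_contra h
    push_neg at h
    have : μ.part i ≤ μ.part j1 := μ.antitone' h
    omega
  have hstar : ¬ (μ.part (j1 - 1) + i + m < μ.part i + (j1 - 1)) :=
    Nat.find_min hP (by omega)
  by_cases hcase : μ.part (j1 - 1) + i + m = μ.part i + (j1 - 1)
  · -- arm case
    have hji : i < j1 - 1 := by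
      rcases Nat.lt_or_ge i (j1 - 1) with h | h
      · exact h
      · exfalso
        have : i = j1 - 1 := by omega
        rw [← this] at hcase
        omega
    refine Or.inl ⟨j1 - 1 - i - 1, ?_⟩
    have he : i + (j1 - 1 - i - 1) + 1 = j1 - 1 := by omega
    rw [he]
    have hle : μ.part (j1 - 1) ≤ μ.part i := μ.antitone' (by omega)
    omega
  · -- hook case
    set k := μ.part i + (j1 - 1) - (i + m) with hkdef
    have hk1 : i + m ≤ μ.part i + (j1 - 1) := by omega
    have hkm : k < μ.part (j1 - 1) := by omega
    have hkm2 : μ.part j1 ≤ k := by omega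
    have hc1 : j1 - 1 < μ.conj.part k := μ.lt_conj_iff.mpr hkm
    have hc2 : ¬ (j1 < μ.conj.part k) := fun h => by
      have := μ.lt_conj_iff.mp h; omega
    have hck : μ.conj.part k = j1 := by omega
    have hki : k < μ.part i := by
      by_contra h
      push_neg at h
      have : ¬ (i < μ.conj.part k) := fun hh => by
        have := μ.lt_conj_iff.mp hh; omega
      omega
    exact Or.inr ⟨k, hki, by omega⟩

private lemma row_sum (μ : Partition') {t : ℂ} (ht : ‖t‖ < 1) (i : ℕ) :
    ∑' d : ℕ, (t ^ (μ.part i - μ.part (i + d + 1) + (d + 1)) - t ^ (d + 1)) =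
      -∑ k ∈ Finset.range (μ.part i), t ^ (μ.part i + μ.conj.part k - (i + k + 1)) := by
  classical
  have hgeo : Summable (fun n : ℕ => t ^ n) := summable_geometric_of_norm_lt_one ht
  set arm : ℕ → ℕ := fun d => μ.part i - μ.part (i + d + 1) + (d + 1) with harm
  set hk : ℕ → ℕ := fun k => μ.part i + μ.conj.part k - (i + k + 1) with hhk
  have harm_inj : Function.Injective arm := (armv_strictMono μ i).injective
  have hsucc_inj : Function.Injective (fun d : ℕ => d + 1) := fun a b h => by simpa using h
  have hA : Summable (fun d => t ^ arm d) := hgeo.comp_injective harm_inj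
  have hB : Summable (fun d : ℕ => t ^ (d + 1)) := hgeo.comp_injective hsucc_inj
  set A : Set ℕ := Set.range arm with hAdef
  set Bf : Finset ℕ := (Finset.range (μ.part i)).image hk with hBfdef
  set B : Set ℕ := ↑Bf with hBdef
  have hdisj : Disjoint A B := by
    rw [Set.disjoint_left]
    rintro m ⟨d, rfl⟩ hmB
    rw [hBdef, Finset.mem_coe, hBfdef, Finset.mem_image] at hmB
    obtain ⟨k, hkmem, hkeq⟩ := hmB
    rw [Finset.mem_range] at hkmem
    exact armv_ne_hkv μ d hkmem hkeq.symm
  have hunion : A ∪ B = {m : ℕ | 1 ≤ m} := by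
    ext m
    simp only [Set.mem_union, Set.mem_setOf_eq]
    constructor
    · rintro (⟨d, rfl⟩ | hmB)
      · simp only [harm]; omega
      · rw [hBdef, Finset.mem_coe, hBfdef, Finset.mem_image] at hmB
        obtain ⟨k, hkmem, rfl⟩ := hmB
        rw [Finset.mem_range] at hkmem
        have := hkv_pos μ hkmem
        simp only [hhk]; omega
    · intro hm
      rcases mem_arm_or_hk μ i m hm with ⟨d, hd⟩ | ⟨k, hki, hkeq⟩
      · exact Or.inl ⟨d, hd⟩
      · refine Or.inr ?_
        rw [hBdef, Finset.mem_coe, hBfdef, Finset.mem_image]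
        exact ⟨k, Finset.mem_range.mpr hki, hkeq⟩
  have eA : ∑' d, t ^ arm d = ∑' m, Set.indicator A (fun m => t ^ m) m := by
    rw [← tsum_subtype]
    exact ((Equiv.ofInjective arm harm_inj).tsum_eq (fun x => t ^ (x : ℕ)))
  have eB' : ∑' d : ℕ, t ^ (d + 1)
      = ∑' m, Set.indicator (A ∪ B) (fun m => t ^ m) m := by
    rw [hunion, ← tsum_subtype]
    have : Set.range (fun d : ℕ => d + 1) = {m : ℕ | 1 ≤ m} := by
      ext m
      simp only [Set.mem_range, Set.mem_setOf_eq]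
      constructor
      · rintro ⟨d, rfl⟩; omega
      · intro h; exact ⟨m - 1, by omega⟩
    rw [← this]
    exact ((Equiv.ofInjective _ hsucc_inj).tsum_eq (fun x => t ^ (x : ℕ)))
  have eB : ∑' m, Set.indicator B (fun m => t ^ m) m
      = ∑ k ∈ Finset.range (μ.part i), t ^ hk k := by
    rw [tsum_eq_sum (s := Bf)
      (fun m hm => Set.indicator_of_notMem (by simpa [hBdef] using hm) _)]
    rw [Finset.sum_congr rfl
      (fun m hm => Set.indicator_of_mem (by simpa [hBdef] using hm) _)]
    refine Finset.sum_image ?_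
    intro x hx y hy hxy
    rw [Finset.mem_coe, Finset.mem_range] at hx hy
    by_contra hne
    rcases Nat.lt_or_ge x y with h | h
    · exact absurd hxy (Nat.ne_of_gt (hkv_lt μ h hy))
    · have h' : y < x := by omega
      exact absurd hxy.symm (Nat.ne_of_gt (hkv_lt μ h' hx))
  have hindsum : ∑' m, Set.indicator (A ∪ B) (fun m => t ^ m) m
      = ∑' m, Set.indicator A (fun m => t ^ m) m + ∑' m, Set.indicator B (fun m => t ^ m) m := by
    rw [Set.indicator_union_of_disjoint hdisj]
    exact Summable.tsum_add (hgeo.indicator A) (hgeo.indicator B)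
  rw [Summable.tsum_sub hA hB, eA, eB', hindsum, eB]
  ring

/-- Identity (69): for `0 < |t| < 1`, the double series
`Σ_{1 ≤ i < j} (t^{μ_i − μ_j + j − i} − t^{j−i})` converges absolutely and equals
`− Σ_{x∈μ} t^{h(x)}`. -/
theorem hook_sum_as_double_series (μ : Partition') (t : ℂ) (h0 : 0 < ‖t‖) (h1 : ‖t‖ < 1) :
    Summable (fun p : {p : ℕ × ℕ // p.1 < p.2} =>
      ‖t ^ ((μ.part p.1.1 : ℤ) - (μ.part p.1.2 : ℤ) + (p.1.2 : ℤ) - (p.1.1 : ℤ)) -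
        t ^ ((p.1.2 : ℤ) - (p.1.1 : ℤ))‖) ∧
    ∑' p : {p : ℕ × ℕ // p.1 < p.2},
        (t ^ ((μ.part p.1.1 : ℤ) - (μ.part p.1.2 : ℤ) + (p.1.2 : ℤ) - (p.1.1 : ℤ)) -
          t ^ ((p.1.2 : ℤ) - (p.1.1 : ℤ))) =
      -∑ x ∈ μ.cells, t ^ μ.hook x := by
  classical
  obtain ⟨N, hN⟩ := μ.eventually_zero
  have hq0 : (0:ℝ) ≤ ‖t‖ := norm_nonneg t
  set F : {p : ℕ × ℕ // p.1 < p.2} → ℂ :=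
    fun p => t ^ (μ.part p.1.1 - μ.part p.1.2 + (p.1.2 - p.1.1)) - t ^ (p.1.2 - p.1.1) with hF
  have hfun : ∀ p : {p : ℕ × ℕ // p.1 < p.2},
      t ^ ((μ.part p.1.1 : ℤ) - (μ.part p.1.2 : ℤ) + (p.1.2 : ℤ) - (p.1.1 : ℤ)) -
        t ^ ((p.1.2 : ℤ) - (p.1.1 : ℤ)) = F p := by
    rintro ⟨⟨i, j⟩, hij⟩
    have hle : μ.part j ≤ μ.part i := μ.antitone' hij.le
    have e1 : ((μ.part i : ℤ) - (μ.part j : ℤ) + (j : ℤ) - (i : ℤ))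
        = ((μ.part i - μ.part j + (j - i) : ℕ) : ℤ) := by
      have hij' : i < j := hij
      omega
    have e2 : ((j : ℤ) - (i : ℤ)) = ((j - i : ℕ) : ℤ) := by
      have hij' : i < j := hij
      omega
    rw [e1, e2, zpow_natCast, zpow_natCast]
  simp only [hfun]
  -- the equiv
  set e : ℕ × ℕ ≃ {p : ℕ × ℕ // p.1 < p.2} :=
    { toFun := fun x => ⟨(x.1, x.1 + x.2 + 1), by omega⟩
      invFun := fun p => (p.1.1, p.1.2 - p.1.1 - 1)
      left_inv := by
        rintro ⟨i, d⟩
        show (i, i + d + 1 - i - 1) = (i, d)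
        rw [show i + d + 1 - i - 1 = d from by omega]
      right_inv := by
        rintro ⟨⟨i, j⟩, h⟩
        have h' : i < j := h
        refine Subtype.ext ?_
        show (i, i + (j - i - 1) + 1) = (i, j)
        rw [show i + (j - i - 1) + 1 = j from by omega] } with he
  have hFe : ∀ x : ℕ × ℕ,
      F (e x) = t ^ (μ.part x.1 - μ.part (x.1 + x.2 + 1) + (x.2 + 1)) - t ^ (x.2 + 1) := by
    rintro ⟨i, d⟩
    simp only [hF, he, Equiv.coe_fn_mk]
    have e1 : i + d + 1 - i = d + 1 := by omega
    rw [e1]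
  -- summability
  have hmaj : Summable (fun x : ℕ × ℕ => (if x.1 < N then (2:ℝ) else 0) * ‖t‖ ^ (x.2 + 1)) := by
    have hs1 : Summable (fun i : ℕ => (if i < N then (2:ℝ) else 0)) := by
      apply summable_of_ne_finset_zero (s := Finset.range N)
      intro i hi
      rw [Finset.mem_range] at hi
      simp [hi]
    have hs2 : Summable (fun d : ℕ => ‖t‖ ^ (d + 1)) := by
      simpa [pow_succ] using (summable_geometric_of_lt_one hq0 h1).mul_right ‖t‖
    refine Summable.mul_of_nonneg (f := fun i : ℕ => if i < N then (2:ℝ) else 0)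
      (g := fun d : ℕ => ‖t‖ ^ (d + 1)) hs1 hs2 ?_ ?_
    · rw [Pi.le_def]
      intro i
      split <;> norm_num
    · rw [Pi.le_def]
      intro d
      positivity
  have hnorm_le : ∀ x : ℕ × ℕ,
      ‖F (e x)‖ ≤ (if x.1 < N then (2:ℝ) else 0) * ‖t‖ ^ (x.2 + 1) := by
    rintro ⟨i, d⟩
    rw [hFe (i, d)]
    by_cases hi : i < N
    · simp only [hi, if_true]
      have hexp : d + 1 ≤ μ.part i - μ.part (i + d + 1) + (d + 1) := by omega
      calc ‖t ^ (μ.part i - μ.part (i + d + 1) + (d + 1)) - t ^ (d + 1)‖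
          ≤ ‖t ^ (μ.part i - μ.part (i + d + 1) + (d + 1))‖ + ‖t ^ (d + 1)‖ :=
            norm_sub_le _ _
        _ ≤ ‖t‖ ^ (d + 1) + ‖t‖ ^ (d + 1) := by
            rw [norm_pow, norm_pow]
            have := pow_le_pow_of_le_one hq0 h1.le hexp
            linarith
        _ = 2 * ‖t‖ ^ (d + 1) := by ring
    · simp only [hi, if_false, zero_mul]
      have hz1 : μ.part i = 0 := hN i (by omega)
      have hz2 : μ.part (i + d + 1) = 0 := hN _ (by omega)
      rw [hz1, hz2]
      simp
  have hsum_norm_e : Summable (fun x : ℕ × ℕ => ‖F (e x)‖) :=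
    Summable.of_nonneg_of_le (fun x => norm_nonneg _) hnorm_le hmaj
  have hsum_norm : Summable (fun p => ‖F p‖) :=
    (Equiv.summable_iff e (f := fun p => ‖F p‖)).mp hsum_norm_e
  refine ⟨hsum_norm, ?_⟩
  have hsumF : Summable F := hsum_norm.of_norm
  have hFe_sum : Summable (fun x : ℕ × ℕ => F (e x)) :=
    (Equiv.summable_iff e (f := F)).mpr hsumF
  calc (∑' p, F p) = ∑' x : ℕ × ℕ, F (e x) := (Equiv.tsum_eq e F).symm
    _ = ∑' (i : ℕ) (d : ℕ), F (e (i, d)) := Summable.tsum_prod hFe_sum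
    _ = ∑' i : ℕ, -∑ k ∈ Finset.range (μ.part i),
          t ^ (μ.part i + μ.conj.part k - (i + k + 1)) := by
        refine tsum_congr fun i => ?_
        rw [show (fun d => F (e (i, d)))
            = fun d => t ^ (μ.part i - μ.part (i + d + 1) + (d + 1)) - t ^ (d + 1) from
          funext fun d => hFe (i, d)]
        exact row_sum μ h1 i
    _ = ∑ i ∈ Finset.range N, -∑ k ∈ Finset.range (μ.part i),
          t ^ (μ.part i + μ.conj.part k - (i + k + 1)) := by
        apply tsum_eq_sum
        intro i hi
        rw [Finset.mem_range] at hi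
        rw [hN i (by omega)]
        simp
    _ = -∑ x ∈ μ.cells, t ^ μ.hook x := by
        rw [Finset.sum_neg_distrib]
        congr 1
        have hcell : ∀ x ∈ μ.cells,
            t ^ μ.hook x = t ^ (μ.part x.1 + μ.conj.part x.2 - (x.1 + x.2 + 1)) := by
          intro x hx
          have hx' : x.2 < μ.part x.1 := by
            have := (Set.Finite.mem_toFinset μ.cellsSet_finite).mp hx
            exact this
          have h2 : x.1 < μ.conj.part x.2 := μ.lt_conj_iff.mpr hx'
          have hint : μ.hook x = ((μ.part x.1 + μ.conj.part x.2 - (x.1 + x.2 + 1) : ℕ) : ℤ) := by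
            unfold Partition'.hook
            omega
          rw [hint, zpow_natCast]
        rw [Finset.sum_congr rfl hcell, Finset.sum_sigma']
        refine Finset.sum_nbij' (fun x => (x.1, x.2)) (fun x => (⟨x.1, x.2⟩ : Σ _ : ℕ, ℕ)) ?_ ?_ ?_ ?_ ?_
        · rintro ⟨i, k⟩ ha
          rw [Finset.mem_sigma, Finset.mem_range, Finset.mem_range] at ha
          exact (Set.Finite.mem_toFinset μ.cellsSet_finite).mpr ha.2
        · rintro ⟨i, k⟩ hx
          have hx' : k < μ.part i := (Set.Finite.mem_toFinset μ.cellsSet_finite).mp hx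
          rw [Finset.mem_sigma, Finset.mem_range, Finset.mem_range]
          refine ⟨?_, hx'⟩
          by_contra h
          push_neg at h
          rw [hN i h] at hx'
          omega
        · rintro ⟨i, k⟩ _
          rfl
        · rintro ⟨i, k⟩ _
          rfl
        · rintro ⟨i, k⟩ _
          rfl
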